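/- Let U be a finite set, 𝓕 a finite family of subsets of U whose union is U, k a natural number, and L a nonempty finite set. Let G be the simple graph on the disjoint union {r,p,q} ⊎ 𝓕 ⊎ U ⊎ L whose edges are: {r,p}; {r,F} for every F ∈ 𝓕; {F,u} for every F ∈ 𝓕 and every u ∈ F; and {q,x} for every x ∈ L. Then 𝓕 contains a subfamily of size at most k whose union is U if and only if G has a dominating set of size at most k+2. -/

import Mathlib

/-- The base relation of the graph built from a Set Cover instance:
    `r = Sum.inl 0`, `p = Sum.inl 1`, `q = Sum.inl 2`, set-vertices `Sum.inr (Sum.inl i)`,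
    element-vertices `Sum.inr (Sum.inr (Sum.inl u))`, star leaves `Sum.inr (Sum.inr (Sum.inr x))`.
    Edges (after symmetrization by `SimpleGraph.fromRel`): {r,p}; {r,F_i} for all i;
    {F_i,u} whenever u ∈ F i; {q,x} for every leaf x. -/
def scdsRel {ι U L : Type*} (F : ι → Set U) :
    (Fin 3 ⊕ ι ⊕ U ⊕ L) → (Fin 3 ⊕ ι ⊕ U ⊕ L) → Prop
  | Sum.inl ⟨0, _⟩, Sum.inl ⟨1, _⟩ => True
  | Sum.inl ⟨0, _⟩, Sum.inr (Sum.inl _) => True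
  | Sum.inr (Sum.inl i), Sum.inr (Sum.inr (Sum.inl u)) => u ∈ F i
  | Sum.inl ⟨2, _⟩, Sum.inr (Sum.inr (Sum.inr _)) => True
  | _, _ => False

lemma scdsRel_iff {ι U L : Type*} (F : ι → Set U) (a b : Fin 3 ⊕ ι ⊕ U ⊕ L) :
    scdsRel (L := L) F a b ↔
      (a = Sum.inl 0 ∧ b = Sum.inl 1) ∨
      (a = Sum.inl 0 ∧ ∃ i, b = Sum.inr (Sum.inl i)) ∨
      (∃ i u, a = Sum.inr (Sum.inl i) ∧ b = Sum.inr (Sum.inr (Sum.inl u)) ∧ u ∈ F i) ∨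
      (a = Sum.inl 2 ∧ ∃ x, b = Sum.inr (Sum.inr (Sum.inr x))) := by
  rcases a with ⟨m, hm⟩ | i | u | x <;> rcases b with ⟨n, hn⟩ | j | v | y <;>
    first
      | (interval_cases m <;> interval_cases n <;> simp [scdsRel, Fin.ext_iff] <;> exact trivial)
      | (try interval_cases m) <;> (try interval_cases n) <;> simp [scdsRel, Fin.ext_iff] <;> exact trivial

theorem stmt_12 {ι U L : Type*} [Fintype ι] [Fintype U] [Fintype L] [Nonempty L]
    (F : ι → Set U) (hcover : ∀ u : U, ∃ i, u ∈ F i) (k : ℕ) :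
    (∃ I : Finset ι, I.card ≤ k ∧ ∀ u : U, ∃ i ∈ I, u ∈ F i) ↔
    (∃ S : Set (Fin 3 ⊕ ι ⊕ U ⊕ L), S.Finite ∧ S.ncard ≤ k + 2 ∧
      ∀ v, v ∈ S ∨ ∃ u ∈ S, (SimpleGraph.fromRel (scdsRel (L := L) F)).Adj v u) := by
  classical
  constructor
  · rintro ⟨I, hIcard, hIcover⟩
    refine ⟨insert (Sum.inl 0) (insert (Sum.inl 2)
      ((fun i => Sum.inr (Sum.inl i) : ι → Fin 3 ⊕ ι ⊕ U ⊕ L) '' (I : Set ι))), ?_, ?_, ?_⟩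
    · exact ((I.finite_toSet.image _).insert _).insert _
    · have h1 := Set.ncard_insert_le (Sum.inl 0 : Fin 3 ⊕ ι ⊕ U ⊕ L)
        (insert (Sum.inl 2) ((fun i => Sum.inr (Sum.inl i) : ι → Fin 3 ⊕ ι ⊕ U ⊕ L) '' (I : Set ι)))
      have h2 := Set.ncard_insert_le (Sum.inl 2 : Fin 3 ⊕ ι ⊕ U ⊕ L)
        ((fun i => Sum.inr (Sum.inl i) : ι → Fin 3 ⊕ ι ⊕ U ⊕ L) '' (I : Set ι))
      have h3 : ((fun i => Sum.inr (Sum.inl i) : ι → Fin 3 ⊕ ι ⊕ U ⊕ L) '' (I : Set ι)).ncard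
          = I.card := by
        rw [Set.ncard_image_of_injective _ (fun a b h => by simpa using h),
          Set.ncard_coe_finset]
      omega
    · intro v
      rcases v with ⟨m, hm⟩ | i | u | x
      · interval_cases m
        · left; simp
        · right
          refine ⟨Sum.inl 0, by simp, ?_⟩
          rw [SimpleGraph.fromRel_adj]
          refine ⟨by simp [Fin.ext_iff], Or.inr ?_⟩
          rw [scdsRel_iff]; simp [Fin.ext_iff]
        · left; simp
      · right
        refine ⟨Sum.inl 0, by simp, ?_⟩
        rw [SimpleGraph.fromRel_adj]
        refine ⟨by simp, Or.inr ?_⟩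
        rw [scdsRel_iff]; simp
      · right
        obtain ⟨i, hiI, hiu⟩ := hIcover u
        refine ⟨Sum.inr (Sum.inl i), by simp [hiI], ?_⟩
        rw [SimpleGraph.fromRel_adj]
        refine ⟨by simp, Or.inr ?_⟩
        rw [scdsRel_iff]
        exact Or.inr (Or.inr (Or.inl ⟨i, u, rfl, rfl, hiu⟩))
      · right
        refine ⟨Sum.inl 2, by simp, ?_⟩
        rw [SimpleGraph.fromRel_adj]
        refine ⟨by simp, Or.inr ?_⟩
        rw [scdsRel_iff]; simp
  · rintro ⟨S, hfin, hcard, hdom⟩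
    set f : ι ⊕ U → (Fin 3 ⊕ ι ⊕ U ⊕ L) :=
      Sum.elim (fun i => Sum.inr (Sum.inl i)) (fun u => Sum.inr (Sum.inr (Sum.inl u))) with hf
    have hfinj : Function.Injective f := by
      rintro (a | a) (b | b) h <;> simp_all [f]
    have hC : (f ⁻¹' S).Finite := hfin.preimage hfinj.injOn
    choose g hg using hcover
    -- find v1 ∈ {r, p} ∩ S
    have hv1 : (Sum.inl 0 : Fin 3 ⊕ ι ⊕ U ⊕ L) ∈ S ∨ (Sum.inl 1 : Fin 3 ⊕ ι ⊕ U ⊕ L) ∈ S := by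
      rcases hdom (Sum.inl 1) with h | ⟨w, hwS, hadj⟩
      · exact Or.inr h
      · rw [SimpleGraph.fromRel_adj] at hadj
        rcases hadj.2 with h | h <;> rw [scdsRel_iff] at h
        · rcases h with ⟨h1, h2⟩ | ⟨h1, i, h2⟩ | ⟨i, u, h1, h2, h3⟩ | ⟨h1, x, h2⟩
          · exact absurd (Sum.inl.inj h1) (by decide)
          · exact absurd (Sum.inl.inj h1) (by decide)
          · exact absurd h1 (by simp)
          · exact absurd (Sum.inl.inj h1) (by decide)
        · rcases h with ⟨h1, h2⟩ | ⟨h1, i, h2⟩ | ⟨i, u, h1, h2, h3⟩ | ⟨h1, x, h2⟩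
          · subst h1; exact Or.inl hwS
          · exact absurd h2 (by simp)
          · exact absurd h2 (by simp)
          · exact absurd h2 (by simp)
    obtain ⟨x0⟩ := (inferInstance : Nonempty L)
    have hv2 : (Sum.inl 2 : Fin 3 ⊕ ι ⊕ U ⊕ L) ∈ S ∨
        (Sum.inr (Sum.inr (Sum.inr x0)) : Fin 3 ⊕ ι ⊕ U ⊕ L) ∈ S := by
      rcases hdom (Sum.inr (Sum.inr (Sum.inr x0))) with h | ⟨w, hwS, hadj⟩
      · exact Or.inr h
      · rw [SimpleGraph.fromRel_adj] at hadj
        rcases hadj.2 with h | h <;> rw [scdsRel_iff] at h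
        · rcases h with ⟨h1, h2⟩ | ⟨h1, i, h2⟩ | ⟨i, u, h1, h2, h3⟩ | ⟨h1, x, h2⟩
          · exact absurd h1 (by simp)
          · exact absurd h1 (by simp)
          · exact absurd h1 (by simp)
          · exact absurd h1 (by simp)
        · rcases h with ⟨h1, h2⟩ | ⟨h1, i, h2⟩ | ⟨i, u, h1, h2, h3⟩ | ⟨h1, x, h2⟩
          · exact absurd h2 (by simp)
          · exact absurd h2 (by simp)
          · exact absurd h2 (by simp)
          · subst h1; exact Or.inl hwS
    obtain ⟨v1, hv1S, hv1form⟩ : ∃ v1, v1 ∈ S ∧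
        (v1 = (Sum.inl 0 : Fin 3 ⊕ ι ⊕ U ⊕ L) ∨ v1 = Sum.inl 1) := by
      rcases hv1 with h | h
      exacts [⟨_, h, Or.inl rfl⟩, ⟨_, h, Or.inr rfl⟩]
    obtain ⟨v2, hv2S, hv2form⟩ : ∃ v2, v2 ∈ S ∧
        (v2 = (Sum.inl 2 : Fin 3 ⊕ ι ⊕ U ⊕ L) ∨ v2 = Sum.inr (Sum.inr (Sum.inr x0))) := by
      rcases hv2 with h | h
      exacts [⟨_, h, Or.inl rfl⟩, ⟨_, h, Or.inr rfl⟩]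
    -- cardinality bound on f ⁻¹' S
    have himg : f '' (f ⁻¹' S) ⊆ S := Set.image_preimage_subset f S
    have hv1ni : v1 ∉ insert v2 (f '' (f ⁻¹' S)) := by
      rcases hv1form with rfl | rfl <;> rcases hv2form with rfl | rfl <;>
        simp [f, Fin.ext_iff]
    have hv2ni : v2 ∉ f '' (f ⁻¹' S) := by
      rcases hv2form with rfl | rfl <;> simp [f]
    have hsub : insert v1 (insert v2 (f '' (f ⁻¹' S))) ⊆ S := by
      intro y hy
      rcases hy with rfl | hy
      · exact hv1S
      rcases hy with rfl | hy
      · exact hv2S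
      · exact himg hy
    have himgfin : (f '' (f ⁻¹' S)).Finite := hC.image f
    have hkey : (f ⁻¹' S).ncard + 2 ≤ k + 2 := by
      have e1 : (insert v1 (insert v2 (f '' (f ⁻¹' S)))).ncard
          = (f '' (f ⁻¹' S)).ncard + 2 := by
        rw [Set.ncard_insert_of_notMem hv1ni (himgfin.insert _),
          Set.ncard_insert_of_notMem hv2ni himgfin]
      have e2 : (f '' (f ⁻¹' S)).ncard = (f ⁻¹' S).ncard :=
        Set.ncard_image_of_injective _ hfinj
      have := Set.ncard_le_ncard hsub hfin
      omega
    refine ⟨hC.toFinset.image (Sum.elim id g), ?_, ?_⟩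
    · calc (hC.toFinset.image (Sum.elim id g)).card ≤ hC.toFinset.card :=
          Finset.card_image_le
        _ = (f ⁻¹' S).ncard := (Set.ncard_eq_toFinset_card _ hC).symm
        _ ≤ k := by omega
    · intro u
      rcases hdom (Sum.inr (Sum.inr (Sum.inl u))) with h | ⟨w, hwS, hadj⟩
      · refine ⟨g u, ?_, hg u⟩
        exact Finset.mem_image.2 ⟨Sum.inr u, by simp [hC.mem_toFinset, f, h], rfl⟩
      · rw [SimpleGraph.fromRel_adj] at hadj
        rcases hadj.2 with h | h <;> rw [scdsRel_iff] at h
        · rcases h with ⟨h1, h2⟩ | ⟨h1, i, h2⟩ | ⟨i, u', h1, h2, h3⟩ | ⟨h1, x, h2⟩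
          · exact absurd h1 (by simp)
          · exact absurd h1 (by simp)
          · exact absurd h1 (by simp)
          · exact absurd h1 (by simp)
        · rcases h with ⟨h1, h2⟩ | ⟨h1, i, h2⟩ | ⟨i, u', h1, h2, h3⟩ | ⟨h1, x, h2⟩
          · exact absurd h2 (by simp)
          · exact absurd h2 (by simp)
          · obtain rfl : u' = u := (by simpa using h2.symm)
            subst h1
            refine ⟨i, ?_, h3⟩
            exact Finset.mem_image.2 ⟨Sum.inl i, by simp [hC.mem_toFinset, f, hwS], rfl⟩
          · exact absurd h2 (by simp)
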